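/- Let P be a finite subset of the Euclidean plane ℝ². If (𝒱(P)).ncard > P.ncard, then P.ncard > 5. -/

import Mathlib

open Set

abbrev Plane : Type := EuclideanSpace ℝ (Fin 2)

/-- The Voronoi cell of a generator `p` for a generating set `P`. -/
def cell (P : Set Plane) (p : Plane) : Set Plane :=
  {x : Plane | ∀ q ∈ P, dist x p ≤ dist x q}

/-- The set of nearest generators of `x` in `P`. -/
def nearest (P : Set Plane) (x : Plane) : Set Plane :=
  {p ∈ P | ∀ q ∈ P, dist x p ≤ dist x q}

/-- The Voronoi vertex set: points with at least 3 nearest generators. -/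
def vtx (P : Set Plane) : Set Plane :=
  {x : Plane | 3 ≤ (nearest P x).encard}

/-- The boundary of a point set: its points on the frontier of its convex hull. -/
def Bd (S : Set Plane) : Set Plane :=
  S ∩ frontier (convexHull ℝ S)

/-- The number of instances of cocircularity. -/
noncomputable def Ic (P : Set Plane) : ℤ :=
  ∑ᶠ x ∈ vtx P, (((nearest P x).ncard : ℤ) - 3)

namespace VorAux

/-- squared distance in coordinates -/
noncomputable def sqd (x y : Plane) : ℝ := (x 0 - y 0)^2 + (x 1 - y 1)^2

/-- cross product (signed area) of `q - p` and `r - p` -/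
def cr (p q r : Plane) : ℝ :=
  (q 0 - p 0)*(r 1 - p 1) - (q 1 - p 1)*(r 0 - p 0)

lemma dist_sq (x y : Plane) : dist x y ^ 2 = sqd x y := by
  rw [EuclideanSpace.dist_eq, Real.sq_sqrt (by positivity)]
  simp [sqd, Fin.sum_univ_two, Real.dist_eq, sq_abs]

lemma sqd_eq_of_dist_eq {x a b : Plane} (h : dist x a = dist x b) : sqd x a = sqd x b := by
  rw [← dist_sq, ← dist_sq, h]

lemma sqd_lt_of_dist_lt {x a b : Plane} (h : dist x a < dist x b) : sqd x a < sqd x b := by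
  rw [← dist_sq, ← dist_sq]
  exact pow_lt_pow_left₀ h dist_nonneg (by norm_num)

lemma eq_of_coords {x y : Plane} (h0 : x 0 = y 0) (h1 : x 1 = y 1) : x = y := by
  ext i; fin_cases i <;> assumption

lemma cr_cyclic (p q r : Plane) : cr p q r = cr q r p := by unfold cr; ring

lemma cr_swap12 (p q r : Plane) : cr q p r = - cr p q r := by unfold cr; ring

lemma cr_ne_distinct {a b c : Plane} (h : cr a b c ≠ 0) : a ≠ b ∧ a ≠ c ∧ b ≠ c := by
  refine ⟨?_, ?_, ?_⟩ <;> rintro rfl <;> apply h <;> unfold cr <;> ring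

/-- three distinct points equidistant from x are not collinear -/
lemma noncollinear_of_equidist {x a b c : Plane} (hab : a ≠ b) (hac : a ≠ c) (hbc : b ≠ c)
    (h1 : sqd x a = sqd x b) (h2 : sqd x a = sqd x c) : cr a b c ≠ 0 := by
  intro hcr
  have hS : 0 < (b 0 - a 0)^2 + (b 1 - a 1)^2 := by
    rcases (show b 0 - a 0 ≠ 0 ∨ b 1 - a 1 ≠ 0 by
      by_contra hcon
      push_neg at hcon
      exact hab (eq_of_coords (by linarith [hcon.1]) (by linarith [hcon.2])).symm) with hx | hx
    · nlinarith [sq_nonneg (b 1 - a 1), sq_pos_of_ne_zero hx]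
    · nlinarith [sq_nonneg (b 0 - a 0), sq_pos_of_ne_zero hx]
  obtain ⟨t, ht0, ht1⟩ : ∃ t : ℝ, c 0 - a 0 = t * (b 0 - a 0) ∧ c 1 - a 1 = t * (b 1 - a 1) := by
    rcases eq_or_ne (b 0 - a 0) 0 with hz | hz
    · have hz1 : b 1 - a 1 ≠ 0 := by
        intro hz1; nlinarith
      refine ⟨(c 1 - a 1)/(b 1 - a 1), ?_, by field_simp⟩
      unfold cr at hcr
      field_simp
      nlinarith [hcr]
    · refine ⟨(c 0 - a 0)/(b 0 - a 0), by field_simp, ?_⟩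
      unfold cr at hcr
      field_simp
      nlinarith [hcr]
  have key : ((b 0 - a 0)^2 + (b 1 - a 1)^2) * (t^2 - t) = 0 := by
    unfold sqd at h1 h2
    have hc0 : c 0 = a 0 + t * (b 0 - a 0) := by linarith
    have hc1 : c 1 = a 1 + t * (b 1 - a 1) := by linarith
    rw [hc0, hc1] at h2
    linear_combination t * h1 - h2
  have ht : t = 0 ∨ t = 1 := by
    rcases mul_eq_zero.1 key with h | h
    · exact absurd h hS.ne'
    · rcases mul_eq_zero.1 (show t * (t - 1) = 0 by nlinarith) with h | h
      · exact Or.inl h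
      · exact Or.inr (by linarith)
  rcases ht with rfl | rfl
  · exact hac (eq_of_coords (by linarith) (by linarith))
  · exact hbc ((eq_of_coords (by linarith [ht0]) (by linarith [ht1]))).symm

/-- uniqueness of the circumcenter of a noncollinear triple -/
lemma circumcenter_unique {x y a b c : Plane} (hcr : cr a b c ≠ 0)
    (hx1 : sqd x a = sqd x b) (hx2 : sqd x a = sqd x c)
    (hy1 : sqd y a = sqd y b) (hy2 : sqd y a = sqd y c) : x = y := by
  unfold sqd at *
  have E1 : (b 0 - a 0) * (x 0 - y 0) + (b 1 - a 1) * (x 1 - y 1) = 0 := by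
    linear_combination (hx1 - hy1) / 2
  have E2 : (c 0 - a 0) * (x 0 - y 0) + (c 1 - a 1) * (x 1 - y 1) = 0 := by
    linear_combination (hx2 - hy2) / 2
  have K0 : (x 0 - y 0) * cr a b c = 0 := by
    unfold cr; linear_combination (c 1 - a 1) * E1 - (b 1 - a 1) * E2
  have K1 : (x 1 - y 1) * cr a b c = 0 := by
    unfold cr; linear_combination (b 0 - a 0) * E2 - (c 0 - a 0) * E1
  have h0 : x 0 - y 0 = 0 := by rcases mul_eq_zero.1 K0 with h | h; exact h; exact absurd h hcr
  have h1 : x 1 - y 1 = 0 := by rcases mul_eq_zero.1 K1 with h | h; exact h; exact absurd h hcr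
  exact eq_of_coords (by linarith) (by linarith)

set_option maxHeartbeats 1000000 in
/-- two distinct empty circles through p,q with witnesses on the same side: impossible -/
lemma same_side_impossible {x y p q r s : Plane}
    (hxpq : sqd x p = sqd x q) (hypq : sqd y p = sqd y q)
    (hxr : sqd x r = sqd x p) (hys : sqd y s = sqd y p)
    (hyr : sqd y p < sqd y r) (hxs : sqd x p < sqd x s)
    (hcr : 0 < cr p q r) (hcs : 0 < cr p q s) : False := by
  unfold sqd at *
  unfold cr at *
  have hwu : (q 0 - p 0) * (x 0 - y 0) + (q 1 - p 1) * (x 1 - y 1) = 0 := by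
    linear_combination (hxpq - hypq) / 2
  have hwR : 0 < (x 0 - y 0) * (r 0 - p 0) + (x 1 - y 1) * (r 1 - p 1) := by
    have hidr : 2 * ((x 0 - y 0) * (r 0 - p 0) + (x 1 - y 1) * (r 1 - p 1)) =
        (((y 0 - r 0)^2 + (y 1 - r 1)^2) - ((y 0 - p 0)^2 + (y 1 - p 1)^2))
        - (((x 0 - r 0)^2 + (x 1 - r 1)^2) - ((x 0 - p 0)^2 + (x 1 - p 1)^2)) := by ring
    linarith [hidr, hxr, hyr]
  have hwS : (x 0 - y 0) * (s 0 - p 0) + (x 1 - y 1) * (s 1 - p 1) < 0 := by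
    have hids : 2 * ((x 0 - y 0) * (s 0 - p 0) + (x 1 - y 1) * (s 1 - p 1)) =
        (((y 0 - s 0)^2 + (y 1 - s 1)^2) - ((y 0 - p 0)^2 + (y 1 - p 1)^2))
        - (((x 0 - s 0)^2 + (x 1 - s 1)^2) - ((x 0 - p 0)^2 + (x 1 - p 1)^2)) := by ring
    linarith [hids, hys, hxs]
  have hid : ((x 0 - y 0)*(r 0 - p 0) + (x 1 - y 1)*(r 1 - p 1)) *
        ((q 0 - p 0)*(s 1 - p 1) - (q 1 - p 1)*(s 0 - p 0))
      - ((x 0 - y 0)*(s 0 - p 0) + (x 1 - y 1)*(s 1 - p 1)) *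
        ((q 0 - p 0)*(r 1 - p 1) - (q 1 - p 1)*(r 0 - p 0))
      = ((q 0 - p 0)*(x 0 - y 0) + (q 1 - p 1)*(x 1 - y 1)) *
        ((r 0 - p 0)*(s 1 - p 1) - (r 1 - p 1)*(s 0 - p 0)) := by ring
  rw [hwu, zero_mul] at hid
  nlinarith [mul_pos hwR hcs, mul_neg_of_neg_of_pos hwS hcr, hid]

/-- core convexity-style estimate on the unit semicircle -/
lemma core (d0 d1 e0 e1 A B : ℝ) (hA : 0 < A) (hB : 0 < B)
    (hAd : A^2 = d0^2 + d1^2) (hBe : B^2 = e0^2 + e1^2)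
    (hd0 : 0 ≤ d0) (he0 : 0 ≤ e0) (hle : d1 * B ≤ e1 * A) :
    0 ≤ d0 * e1 - d1 * e0 := by
  rcases le_or_gt 0 d1 with h1 | h1
  · have he1 : 0 ≤ e1 := by
      have : 0 ≤ e1 * A := le_trans (mul_nonneg h1 hB.le) hle
      exact nonneg_of_mul_nonneg_right (by linarith [mul_comm e1 A] : 0 ≤ A * e1) hA
    have h2 : (d1*B)^2 ≤ (e1*A)^2 := by
      apply pow_le_pow_left₀ (mul_nonneg h1 hB.le) hle
    have hBe' : (d1*B)^2 = d1^2*e0^2 + d1^2*e1^2 := by linear_combination d1^2 * hBe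
    have hAd' : (e1*A)^2 = e1^2*d0^2 + e1^2*d1^2 := by linear_combination e1^2 * hAd
    have h3 : (d1*e0)^2 ≤ (d0*e1)^2 := by nlinarith [h2, hBe', hAd']
    have h4 : d1*e0 ≤ d0*e1 := by
      have h5 := Real.sqrt_le_sqrt h3
      rwa [Real.sqrt_sq (mul_nonneg h1 he0), Real.sqrt_sq (mul_nonneg hd0 he1)] at h5
    linarith
  · rcases le_or_gt 0 e1 with h2 | h2
    · have := mul_nonneg hd0 h2
      have := mul_nonneg (neg_nonneg.2 h1.le) he0
      nlinarith
    · have hd1B : d1 * B < 0 := mul_neg_of_neg_of_pos h1 hB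
      have he1A : e1 * A < 0 := mul_neg_of_neg_of_pos h2 hA
      have h2' : (e1*A)^2 ≤ (d1*B)^2 := by
        have hp := mul_nonpos_of_nonneg_of_nonpos (sub_nonneg.2 hle) (by linarith : e1*A + d1*B ≤ 0)
        nlinarith [hp]
      have hBe' : (d1*B)^2 = d1^2*e0^2 + d1^2*e1^2 := by linear_combination d1^2 * hBe
      have hAd' : (e1*A)^2 = e1^2*d0^2 + e1^2*d1^2 := by linear_combination e1^2 * hAd
      have h3 : (d0*e1)^2 ≤ (d1*e0)^2 := by nlinarith [h2', hBe', hAd']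
      have h4 : -(d0*e1) ≤ -(d1*e0) := by
        have h5 := Real.sqrt_le_sqrt h3
        rwa [Real.sqrt_sq_eq_abs, Real.sqrt_sq_eq_abs,
          abs_of_nonpos (mul_nonpos_of_nonneg_of_nonpos hd0 h2.le),
          abs_of_nonpos (mul_nonpos_of_nonpos_of_nonneg h1.le he0)] at h5
      linarith

/-- from a point p minimizing the first coordinate, two one-sided pairs -/
lemma extreme_pairs {P : Set Plane} (hP : P.Finite) {p a b c : Plane} (hp : p ∈ P)
    (hmin : ∀ r ∈ P, p 0 ≤ r 0) (ha : a ∈ P) (hb : b ∈ P) (hc : c ∈ P)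
    (habc : cr a b c ≠ 0) :
    ∃ q ∈ P, ∃ q' ∈ P, q ≠ p ∧ q' ≠ p ∧ q ≠ q' ∧
      (∀ r ∈ P, 0 ≤ cr p q r) ∧ (∀ r ∈ P, cr p q' r ≤ 0) := by
  obtain ⟨hab, hac, hbc⟩ := cr_ne_distinct habc
  have hSne : (P \ {p}).Nonempty := by
    rcases eq_or_ne a p with rfl | hane
    · exact ⟨b, hb, by simpa using hab.symm⟩
    · exact ⟨a, ha, by simpa using hane⟩
  have hSfin : (P \ {p}).Finite := hP.subset diff_subset
  set f : Plane → ℝ := fun r => (r 1 - p 1) / dist p r with hf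
  obtain ⟨q, hqS, hqmin⟩ := Set.exists_min_image _ f hSfin hSne
  obtain ⟨q', hq'S, hq'max⟩ := Set.exists_max_image _ f hSfin hSne
  have hdist : ∀ d : Plane, d ∈ P \ {p} → 0 < dist p d ∧
      dist p d ^ 2 = (d 0 - p 0)^2 + (d 1 - p 1)^2 := by
    intro d hd
    refine ⟨dist_pos.2 (by simpa using (Ne.symm (by simpa using hd.2))), ?_⟩
    rw [dist_sq]; unfold sqd; ring
  have key : ∀ d ∈ P \ {p}, ∀ e ∈ P \ {p}, f d ≤ f e → 0 ≤ cr p d e := by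
    intro d hd e he hfe
    obtain ⟨hA, hAd⟩ := hdist d hd
    obtain ⟨hB, hBe⟩ := hdist e he
    have hle : (d 1 - p 1) * dist p e ≤ (e 1 - p 1) * dist p d := by
      rw [hf] at hfe; simp only at hfe
      rwa [div_le_div_iff₀ hA hB] at hfe
    have := core (d 0 - p 0) (d 1 - p 1) (e 0 - p 0) (e 1 - p 1)
      (dist p d) (dist p e) hA hB hAd hBe
      (by linarith [hmin d hd.1]) (by linarith [hmin e he.1]) hle
    unfold cr; linarith
  have key2 : ∀ d ∈ P \ {p}, ∀ e ∈ P \ {p}, f e ≤ f d → cr p d e ≤ 0 := by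
    intro d hd e he hfe
    obtain ⟨hA, hAd⟩ := hdist d hd
    obtain ⟨hB, hBe⟩ := hdist e he
    have hle : (e 1 - p 1) * dist p d ≤ (d 1 - p 1) * dist p e := by
      rw [hf] at hfe; simp only at hfe
      rwa [div_le_div_iff₀ hB hA] at hfe
    have := core (d 0 - p 0) (-(d 1 - p 1)) (e 0 - p 0) (-(e 1 - p 1))
      (dist p d) (dist p e) hA hB (by linarith [hAd]) (by linarith [hBe])
      (by linarith [hmin d hd.1]) (by linarith [hmin e he.1]) (by linarith)
    unfold cr; linarith
  refine ⟨q, hqS.1, q', hq'S.1, by simpa using hqS.2, by simpa using hq'S.2, ?_, ?_, ?_⟩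
  · rintro rfl
    have hall : ∀ r ∈ P \ {p}, ∀ s ∈ P \ {p}, cr p r s = 0 := by
      intro r hr s hs
      have h1 := key r hr s hs (le_trans (hq'max r hr) (hqmin s hs))
      have h2 := key s hs r hr (le_trans (hq'max s hs) (hqmin r hr))
      have : cr p s r = - cr p r s := by unfold cr; ring
      linarith [h1, h2, this ▸ h2]
    have hzero : ∀ x ∈ P, ∀ y ∈ P, cr p x y = 0 := by
      intro x hx y hy
      rcases eq_or_ne x p with rfl | hxp
      · unfold cr; ring
      rcases eq_or_ne y p with rfl | hyp
      · unfold cr; ring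
      exact hall x ⟨hx, by simpa using hxp⟩ y ⟨hy, by simpa using hyp⟩
    apply habc
    have hsum : cr a b c = cr p a b + cr p b c + cr p c a := by unfold cr; ring
    rw [hsum, hzero a ha b hb, hzero b hb c hc, hzero c hc a ha]; ring
  · intro r hr
    rcases eq_or_ne r p with heq | hrp
    · subst heq
      have : cr r q r = 0 := by unfold cr; ring
      linarith
    · exact key q hqS r ⟨hr, by simpa using hrp⟩ (hqmin r ⟨hr, by simpa using hrp⟩)
  · intro r hr
    rcases eq_or_ne r p with heq | hrp
    · subst heq
      have : cr r q' r = 0 := by unfold cr; ring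
      linarith
    · exact key2 q' hq'S r ⟨hr, by simpa using hrp⟩ (hq'max r ⟨hr, by simpa using hrp⟩)

lemma crneg (u v w : Plane) : cr (-u) (-v) (-w) = cr u v w := by
  unfold cr; simp only [PiLp.neg_apply]; ring

/-- a one-sided (supporting) ordered pair -/
def onesided (P : Set Plane) (E : Plane × Plane) : Prop :=
  E.1 ∈ P ∧ E.2 ∈ P ∧ E.1 ≠ E.2 ∧ ∀ r ∈ P, cr E.1 E.2 r ≤ 0

lemma three_onesided {P : Set Plane} (hP : P.Finite) {a b c : Plane}
    (ha : a ∈ P) (hb : b ∈ P) (hc : c ∈ P) (habc : cr a b c ≠ 0) :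
    ∃ A B C : Plane × Plane, A ≠ B ∧ A ≠ C ∧ B ≠ C ∧
      onesided P A ∧ onesided P B ∧ onesided P C := by
  have hPne : P.Nonempty := ⟨a, ha⟩
  obtain ⟨p, hp, hpmin⟩ := Set.exists_min_image P (fun z => z 0) hP hPne
  obtain ⟨p', hp', hpmax⟩ := Set.exists_max_image P (fun z => z 0) hP hPne
  have hpp' : p ≠ p' := by
    rintro rfl
    apply habc
    have hB0 : b 0 = a 0 := le_antisymm (hpmax b hb) (hpmin b hb) |>.trans
      (le_antisymm (hpmin a ha) (hpmax a ha))
    have hC0 : c 0 = a 0 := le_antisymm (hpmax c hc) (hpmin c hc) |>.trans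
      (le_antisymm (hpmin a ha) (hpmax a ha))
    unfold cr
    linear_combination (c 1 - a 1) * hB0 - (b 1 - a 1) * hC0
  obtain ⟨q, hq, q', hq', hqp, hq'p, hqq', hQ, hQ'⟩ :=
    extreme_pairs hP hp hpmin ha hb hc habc
  set N : Set Plane := (fun z => -z) '' P with hN
  have hNfin : N.Finite := hP.image _
  have hNp : -p' ∈ N := ⟨p', hp', rfl⟩
  have hNmin : ∀ r ∈ N, (-p') 0 ≤ r 0 := by
    rintro r ⟨w, hw, rfl⟩
    simp only [PiLp.neg_apply]
    have := hpmax w hw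
    linarith
  have hNa : -a ∈ N := ⟨a, ha, rfl⟩
  have hNb : -b ∈ N := ⟨b, hb, rfl⟩
  have hNc : -c ∈ N := ⟨c, hc, rfl⟩
  obtain ⟨m, hm, m', hm', hmp, hm'p, hmm', hM, hM'⟩ :=
    extreme_pairs hNfin hNp hNmin hNa hNb hNc (by rwa [crneg a b c])
  obtain ⟨w, hw, rfl⟩ := hm
  obtain ⟨w', hw', rfl⟩ := hm'
  have hwp' : w ≠ p' := fun h => hmp (by rw [h])
  have hw'p' : w' ≠ p' := fun h => hm'p (by rw [h])
  have hww' : w ≠ w' := fun h => hmm' (by rw [h])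
  have hW : ∀ r ∈ P, 0 ≤ cr p' w r := by
    intro r hr
    have := hM (-r) ⟨r, hr, rfl⟩
    rwa [crneg] at this
  have hW' : ∀ r ∈ P, cr p' w' r ≤ 0 := by
    intro r hr
    have := hM' (-r) ⟨r, hr, rfl⟩
    rwa [crneg] at this
  have hA : onesided P (q, p) :=
    ⟨hq, hp, hqp, fun r hr => by rw [cr_swap12]; linarith [hQ r hr]⟩
  have hB : onesided P (p, q') := ⟨hp, hq', fun h => hq'p h.symm, hQ'⟩
  have hC : onesided P (w, p') :=
    ⟨hw, hp', hwp', fun r hr => by rw [cr_swap12]; linarith [hW r hr]⟩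
  have hD : onesided P (p', w') := ⟨hp', hw', fun h => hw'p' h.symm, hW'⟩
  by_cases hAD : (q, p) = ((p', w') : Plane × Plane)
  · refine ⟨(q, p), (p, q'), (w, p'), ?_, ?_, ?_, hA, hB, hC⟩
    · intro h; rw [Prod.mk.injEq] at h; exact hqp h.1
    · intro h; rw [Prod.mk.injEq] at h; exact hpp' h.2
    · intro h; rw [Prod.mk.injEq] at h
      rw [Prod.mk.injEq] at hAD
      exact hww' (h.1.symm.trans hAD.2)
  · refine ⟨(q, p), (p, q'), (p', w'), ?_, hAD, ?_, hA, hB, hD⟩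
    · intro h; rw [Prod.mk.injEq] at h; exact hqp h.1
    · intro h; rw [Prod.mk.injEq] at h; exact hpp' h.1

lemma mem_nearest {P : Set Plane} {x p : Plane} :
    p ∈ nearest P x ↔ p ∈ P ∧ ∀ q ∈ P, dist x p ≤ dist x q := Iff.rfl

lemma nearest_dist_eq {P : Set Plane} {x p q : Plane}
    (hp : p ∈ nearest P x) (hq : q ∈ nearest P x) : dist x p = dist x q :=
  le_antisymm (hp.2 q hq.1) (hq.2 p hp.1)

lemma nearest_dist_lt {P : Set Plane} {x p r : Plane}
    (hp : p ∈ nearest P x) (hr : r ∈ P) (hrn : r ∉ nearest P x) :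
    dist x p < dist x r := by
  rcases lt_or_eq_of_le (hp.2 r hr) with h | h
  · exact h
  · exact absurd ⟨hr, fun q hq => h ▸ hp.2 q hq⟩ hrn

/-- extract a noncollinear triple of nearest points at a Voronoi vertex -/
lemma vertex_triple {P : Set Plane} (hP : P.Finite) {x : Plane} (hx : x ∈ vtx P) :
    ∃ a b c : Plane, a ∈ nearest P x ∧ b ∈ nearest P x ∧ c ∈ nearest P x ∧
      a ≠ b ∧ a ≠ c ∧ b ≠ c ∧ cr a b c ≠ 0 := by
  have hfin : (nearest P x).Finite := hP.subset (fun p hp => hp.1)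
  have hx' : 3 ≤ (nearest P x).encard := hx
  rw [Set.Finite.encard_eq_coe_toFinset_card hfin] at hx'
  have hcard : 2 < hfin.toFinset.card := by exact_mod_cast hx'
  obtain ⟨a, b, c, ha, hb, hc, hab, hac, hbc⟩ := Finset.two_lt_card_iff.1 hcard
  rw [Set.Finite.mem_toFinset] at ha hb hc
  refine ⟨a, b, c, ha, hb, hc, hab, hac, hbc, ?_⟩
  exact noncollinear_of_equidist hab hac hbc
    (sqd_eq_of_dist_eq (nearest_dist_eq ha hb))
    (sqd_eq_of_dist_eq (nearest_dist_eq ha hc))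

end VorAux

open VorAux in
theorem growth_needs_more_than_five (P : Set Plane) (hP : P.Finite)
    (h : P.ncard < (vtx P).ncard) : 5 < P.ncard := by
  classical
  by_contra hn
  push_neg at hn
  have hVfin : (vtx P).Finite := by
    by_contra hinf
    rw [Set.Infinite.ncard hinf] at h
    exact Nat.not_lt_zero _ h
  have hVne : (vtx P).Nonempty := Set.nonempty_of_ncard_ne_zero (by omega)
  obtain ⟨x₀, hx₀⟩ := hVne
  obtain ⟨a, b, c, ha, hb, hc, -, -, -, habc⟩ := vertex_triple hP hx₀
  obtain ⟨A, B, C, hABne, hACne, hBCne, hA, hB, hC⟩ :=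
    three_onesided hP ha.1 hb.1 hc.1 habc
  set PF : Finset Plane := hP.toFinset with hPF
  set VF : Finset Plane := hVfin.toFinset with hVF
  set G : Finset (Plane × Plane) := PF.offDiag with hG
  set U : Plane → Finset (Plane × Plane) := fun x => G.filter (fun E =>
      E.1 ∈ nearest P x ∧ E.2 ∈ nearest P x ∧ ∃ r ∈ nearest P x, 0 < cr E.1 E.2 r) with hU
  -- each vertex uses at least 3 ordered pairs
  have hU3 : ∀ x ∈ VF, 3 ≤ (U x).card := by
    intro x hxV
    have hxv : x ∈ vtx P := (Set.Finite.mem_toFinset hVfin).1 hxV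
    obtain ⟨a', b', c', ha', hb', hc', hab', hac', hbc', hcr'⟩ := vertex_triple hP hxv
    -- wlog positive orientation
    have main : ∀ a b c : Plane, a ∈ nearest P x → b ∈ nearest P x → c ∈ nearest P x →
        a ≠ b → a ≠ c → b ≠ c → 0 < cr a b c → 3 ≤ (U x).card := by
      intro a b c ha hb hc hab hac hbc hpos
      have hmemU : ∀ u v w : Plane, u ∈ nearest P x → v ∈ nearest P x → w ∈ nearest P x →
          u ≠ v → 0 < cr u v w → (u, v) ∈ U x := by
        intro u v w hu hv hw huv hw'
        rw [hU]
        refine Finset.mem_filter.2 ⟨?_, hu, hv, w, hw, hw'⟩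
        rw [hG]
        exact Finset.mem_offDiag.2 ⟨(Set.Finite.mem_toFinset hP).2 hu.1,
          (Set.Finite.mem_toFinset hP).2 hv.1, huv⟩
      have h1 : (a, b) ∈ U x := hmemU a b c ha hb hc hab hpos
      have h2 : (b, c) ∈ U x := hmemU b c a hb hc ha hbc (by rw [← cr_cyclic]; exact hpos)
      have h3 : (c, a) ∈ U x := hmemU c a b hc ha hb (Ne.symm hac)
        (by rw [← cr_cyclic, ← cr_cyclic]; exact hpos)
      have hsub : ({(a, b), (b, c), (c, a)} : Finset (Plane × Plane)) ⊆ U x := by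
        intro E hE
        simp only [Finset.mem_insert, Finset.mem_singleton] at hE
        rcases hE with rfl | rfl | rfl <;> assumption
      have hc3 : ({(a, b), (b, c), (c, a)} : Finset (Plane × Plane)).card = 3 := by
        rw [Finset.card_insert_of_notMem, Finset.card_insert_of_notMem,
          Finset.card_singleton]
        · simp only [Finset.mem_singleton]
          intro hE; rw [Prod.mk.injEq] at hE; exact hbc hE.1
        · simp only [Finset.mem_insert, Finset.mem_singleton]
          rintro (hE | hE) <;> rw [Prod.mk.injEq] at hE
          · exact hab hE.1
          · exact hac (hE.1.symm ▸ rfl)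
      calc 3 = ({(a, b), (b, c), (c, a)} : Finset (Plane × Plane)).card := hc3.symm
        _ ≤ (U x).card := Finset.card_le_card hsub
    rcases lt_or_gt_of_ne hcr' with hneg | hpos
    · exact main b' a' c' hb' ha' hc' (Ne.symm hab') hbc' hac'
        (by rw [cr_swap12]; linarith)
    · exact main a' b' c' ha' hb' hc' hab' hac' hbc' hpos
  -- distinct vertices use disjoint pair sets
  have hUdisj : ∀ x ∈ VF, ∀ y ∈ VF, x ≠ y → Disjoint (U x) (U y) := by
    intro x hxV y hyV hxy
    rw [Finset.disjoint_left]
    intro E hEx hEy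
    rw [hU] at hEx hEy
    obtain ⟨hEG, hux, hvx, r, hrx, hrpos⟩ := Finset.mem_filter.1 hEx
    obtain ⟨-, huy, hvy, s, hsy, hspos⟩ := Finset.mem_filter.1 hEy
    have huv : E.1 ≠ E.2 := (Finset.mem_offDiag.1 (hG ▸ hEG)).2.2
    -- r is not nearest for y, s is not nearest for x
    have hrny : r ∉ nearest P y := by
      intro hry
      exact hxy (circumcenter_unique (ne_of_gt hrpos)
        (sqd_eq_of_dist_eq (nearest_dist_eq hux hvx))
        (sqd_eq_of_dist_eq (nearest_dist_eq hux hrx))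
        (sqd_eq_of_dist_eq (nearest_dist_eq huy hvy))
        (sqd_eq_of_dist_eq (nearest_dist_eq huy hry)))
    have hsnx : s ∉ nearest P x := by
      intro hsx
      exact hxy (circumcenter_unique (ne_of_gt hspos)
        (sqd_eq_of_dist_eq (nearest_dist_eq hux hvx))
        (sqd_eq_of_dist_eq (nearest_dist_eq hux hsx))
        (sqd_eq_of_dist_eq (nearest_dist_eq huy hvy))
        (sqd_eq_of_dist_eq (nearest_dist_eq huy hsy)))
    exact same_side_impossible
      (sqd_eq_of_dist_eq (nearest_dist_eq hux hvx))
      (sqd_eq_of_dist_eq (nearest_dist_eq huy hvy))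
      (sqd_eq_of_dist_eq (nearest_dist_eq hrx hux))
      (sqd_eq_of_dist_eq (nearest_dist_eq hsy huy))
      (sqd_lt_of_dist_lt (nearest_dist_lt huy hrx.1 hrny))
      (sqd_lt_of_dist_lt (nearest_dist_lt hux hsy.1 hsnx))
      hrpos hspos
  -- all used pairs avoid the three one-sided pairs
  have hsub : VF.biUnion U ⊆ G \ {A, B, C} := by
    intro E hE
    obtain ⟨x, hxV, hEU⟩ := Finset.mem_biUnion.1 hE
    rw [hU] at hEU
    obtain ⟨hEG, hux, hvx, r, hrx, hrpos⟩ := Finset.mem_filter.1 hEU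
    refine Finset.mem_sdiff.2 ⟨hEG, ?_⟩
    simp only [Finset.mem_insert, Finset.mem_singleton]
    rintro (rfl | rfl | rfl)
    · exact absurd hrpos (not_lt.2 (hA.2.2.2 r hrx.1))
    · exact absurd hrpos (not_lt.2 (hB.2.2.2 r hrx.1))
    · exact absurd hrpos (not_lt.2 (hC.2.2.2 r hrx.1))
  have hABCG : ({A, B, C} : Finset (Plane × Plane)) ⊆ G := by
    intro E hE
    simp only [Finset.mem_insert, Finset.mem_singleton] at hE
    have hone : onesided P E := by rcases hE with rfl | rfl | rfl <;> assumption
    rw [hG]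
    exact Finset.mem_offDiag.2 ⟨(Set.Finite.mem_toFinset hP).2 hone.1,
      (Set.Finite.mem_toFinset hP).2 hone.2.1, hone.2.2.1⟩
  have hABCcard : ({A, B, C} : Finset (Plane × Plane)).card = 3 := by
    rw [Finset.card_insert_of_notMem, Finset.card_insert_of_notMem,
      Finset.card_singleton]
    · simpa using hBCne
    · simp only [Finset.mem_insert, Finset.mem_singleton]
      rintro (hE | hE)
      · exact hABne hE
      · exact hACne hE
  -- counting
  have hcount : 3 * VF.card ≤ G.card - 3 := by
    have e1 : 3 * VF.card ≤ ∑ x ∈ VF, (U x).card := by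
      calc 3 * VF.card = ∑ _x ∈ VF, 3 := by rw [Finset.sum_const, smul_eq_mul, mul_comm]
        _ ≤ ∑ x ∈ VF, (U x).card := Finset.sum_le_sum hU3
    have e2 : ∑ x ∈ VF, (U x).card = (VF.biUnion U).card := (Finset.card_biUnion hUdisj).symm
    have e3 : (VF.biUnion U).card ≤ (G \ {A, B, C}).card := Finset.card_le_card hsub
    have e4 : (G \ ({A, B, C} : Finset (Plane × Plane))).card = G.card - 3 := by
      rw [Finset.card_sdiff_of_subset hABCG, hABCcard]
    omega
  have hGcard : G.card = PF.card * PF.card - PF.card := Finset.offDiag_card PF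
  have hPFcard : PF.card = P.ncard := (Set.ncard_eq_toFinset_card P hP).symm
  have hVFcard : VF.card = (vtx P).ncard := (Set.ncard_eq_toFinset_card _ hVfin).symm
  have hnn : PF.card * PF.card ≤ 5 * PF.card := by
    apply Nat.mul_le_mul_right
    omega
  omega
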